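/- Let ψ : (0,∞) → (0,∞) be monotone (increasing), and suppose there exist a continuous strictly decreasing function λ : (0,∞) → (0,∞) and a function ξ such that lim_{s↓0} ψ(λ(θ)s)/ψ(s) = ξ(λ(θ)) for every θ > 0. Then lim_{s↓0} ψ(λs)/ψ(s) exists for every λ in the interval (0, λ(0+)), and by Karamata's characterization theorem there exists p ∈ ℝ such that the limit equals λ^p for all λ > 0, i.e., ψ is regularly varying at 0 with index p. -/

import Mathlib

open Filter Set Real

private lemma stmt19_mul_tendsto {l : ℝ} (hl : 0 < l) :
    Tendsto (fun s => l * s) (nhdsWithin 0 (Set.Ioi 0)) (nhdsWithin 0 (Set.Ioi 0)) := by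
  apply tendsto_nhdsWithin_of_tendsto_nhds_of_eventually_within
  · have h : Tendsto (fun s : ℝ => l * s) (nhds 0) (nhds (l * 0)) :=
      (continuous_const.mul continuous_id).tendsto 0
    simpa using h.mono_left nhdsWithin_le_nhds
  · filter_upwards [self_mem_nhdsWithin] with s hs
    exact mul_pos hl hs

private lemma stmt19_linear {γ : ℝ → ℝ} (hadd : ∀ a b, γ (a + b) = γ a + γ b)
    (hmono : Monotone γ) (a : ℝ) : γ a = γ 1 * a := by
  have h0 : γ 0 = 0 := by
    have := hadd 0 0; simpa using this
  set G : ℝ →+ ℝ := AddMonoidHom.mk' γ hadd with hG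
  have hq : ∀ q : ℚ, γ (q : ℝ) = (q : ℝ) * γ 1 := by
    intro q
    have h1 : γ ((q : ℝ)) = γ (q • (1 : ℝ)) := by norm_num
    have h2 := map_rat_smul G q (1 : ℝ)
    simpa [hG, smul_eq_mul, Rat.smul_def] using h1.trans h2
  have hp : 0 ≤ γ 1 := by
    have := hmono (show (0:ℝ) ≤ 1 by norm_num)
    linarith
  rcases eq_or_lt_of_le hp with hp0 | hp0
  · -- γ 1 = 0 : all rationals map to 0, squeeze
    have hql : ∀ q : ℚ, γ (q : ℝ) = 0 := by intro q; rw [hq, ← hp0]; ring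
    obtain ⟨q1, hq1⟩ := exists_rat_lt a
    obtain ⟨q2, hq2⟩ := exists_rat_gt a
    have h1 := hmono hq1.le
    have h2 := hmono hq2.le
    rw [hql q1] at h1; rw [hql q2] at h2
    rw [← hp0]
    linarith
  · have hub : γ a ≤ γ 1 * a := by
      by_contra h
      push_neg at h
      have hlt : a < γ a / γ 1 := (lt_div_iff₀ hp0).mpr (by linarith [mul_comm (γ 1) a])
      obtain ⟨q, hq1, hq2⟩ := exists_rat_btwn hlt
      have h1 : γ a ≤ γ (q : ℝ) := hmono hq1.le
      rw [hq] at h1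
      have h2 : (q : ℝ) * γ 1 < (γ a / γ 1) * γ 1 := by
        exact mul_lt_mul_of_pos_right hq2 hp0
      rw [div_mul_cancel₀ _ hp0.ne'] at h2
      linarith
    have hlb : γ 1 * a ≤ γ a := by
      by_contra h
      push_neg at h
      have hlt : γ a / γ 1 < a := (div_lt_iff₀ hp0).mpr (by linarith [mul_comm (γ 1) a])
      obtain ⟨q, hq1, hq2⟩ := exists_rat_btwn hlt
      have h1 : γ (q : ℝ) ≤ γ a := hmono hq2.le
      rw [hq] at h1
      have h2 : (γ a / γ 1) * γ 1 < (q : ℝ) * γ 1 := mul_lt_mul_of_pos_right hq1 hp0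
      rw [div_mul_cancel₀ _ hp0.ne'] at h2
      linarith
    linarith

/-- if `ψ` is monotone on `(0,∞)` and
`ψ(λ(θ)s)/ψ(s) → ξ(λ(θ))` as `s ↓ 0` for a continuous strictly decreasing
positive `λ(·)`, then `ψ(ls)/ψ(s)` converges as `s ↓ 0` for all
`l ∈ (0, λ(0+))`, and there is `p ∈ ℝ` such that the limit is `l^p` for all
`l > 0`, i.e. `ψ` is regularly varying at `0`. -/
theorem stmt19 (ψ : ℝ → ℝ) (hψpos : ∀ x > 0, 0 < ψ x)
    (hψmono : MonotoneOn ψ (Set.Ioi 0))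
    (lam : ℝ → ℝ) (hlamcont : ContinuousOn lam (Set.Ioi 0))
    (hlamanti : StrictAntiOn lam (Set.Ioi 0))
    (hlampos : ∀ θ > 0, 0 < lam θ)
    (ξ : ℝ → ℝ) (hξpos : ∀ θ > 0, 0 < ξ (lam θ))
    (hconv : ∀ θ > 0, Tendsto (fun s => ψ (lam θ * s) / ψ s)
      (nhdsWithin 0 (Set.Ioi 0)) (nhds (ξ (lam θ)))) :
    (∀ l, 0 < l → l < sSup (lam '' Set.Ioi 0) →
      ∃ cl : ℝ, Tendsto (fun s => ψ (l * s) / ψ s)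
        (nhdsWithin 0 (Set.Ioi 0)) (nhds cl)) ∧
    ∃ p : ℝ, ∀ l > 0, Tendsto (fun s => ψ (l * s) / ψ s)
      (nhdsWithin 0 (Set.Ioi 0)) (nhds (l ^ p)) := by
  set P : ℝ → ℝ → Prop := fun l c =>
    Tendsto (fun s => ψ (l * s) / ψ s) (nhdsWithin 0 (Set.Ioi 0)) (nhds c) with hP
  -- multiplicativity of limits
  have hmul : ∀ l1 l2 c1 c2, 0 < l2 → P l1 c1 → P l2 c2 → P (l1 * l2) (c1 * c2) := by
    intro l1 l2 c1 c2 hl2 h1 h2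
    have h1' : Tendsto (fun s => ψ (l1 * (l2 * s)) / ψ (l2 * s))
        (nhdsWithin 0 (Set.Ioi 0)) (nhds c1) := h1.comp (stmt19_mul_tendsto hl2)
    refine Tendsto.congr' ?_ (h1'.mul h2)
    filter_upwards [self_mem_nhdsWithin] with s hs
    have hs' : (0:ℝ) < s := hs
    have h2s : ψ (l2 * s) ≠ 0 := (hψpos _ (mul_pos hl2 hs')).ne'
    have hss : ψ s ≠ 0 := (hψpos _ hs').ne'
    field_simp [mul_assoc]
  have hone : P 1 1 := by
    refine Tendsto.congr' ?_ tendsto_const_nhds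
    filter_upwards [self_mem_nhdsWithin] with s hs
    rw [one_mul, div_self (hψpos s hs).ne']
  have hinv : ∀ l c, 0 < l → 0 < c → P l c → P l⁻¹ c⁻¹ := by
    intro l c hl hc h
    have h1 : Tendsto (fun s => ψ (l * (l⁻¹ * s)) / ψ (l⁻¹ * s))
        (nhdsWithin 0 (Set.Ioi 0)) (nhds c) := h.comp (stmt19_mul_tendsto (inv_pos.mpr hl))
    refine Tendsto.congr' ?_ (h1.inv₀ hc.ne')
    filter_upwards [self_mem_nhdsWithin] with s hs
    have hls : l * (l⁻¹ * s) = s := by field_simp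
    simp only [hls, inv_div]
  -- the multiplicative set of good ratios
  set Sset : Set ℝ := {l | 0 < l ∧ ∃ c, 0 < c ∧ P l c} with hSset
  have hJS : lam '' Set.Ioi 0 ⊆ Sset := by
    rintro x ⟨θ, hθ, rfl⟩
    exact ⟨hlampos θ hθ, ξ (lam θ), hξpos θ hθ, hconv θ hθ⟩
  have hJ : IsPreconnected (lam '' Set.Ioi 0) := (isPreconnected_Ioi).image lam hlamcont
  have h12 : lam 2 < lam 1 :=
    hlamanti (by norm_num : (1:ℝ) ∈ Set.Ioi 0) (by norm_num : (2:ℝ) ∈ Set.Ioi 0) (by norm_num)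
  have hIcc : Set.Icc (lam 2) (lam 1) ⊆ lam '' Set.Ioi 0 :=
    hJ.Icc_subset ⟨2, by norm_num, rfl⟩ ⟨1, by norm_num, rfl⟩
  -- additive subgroup of good exponents
  set A : AddSubgroup ℝ :=
    { carrier := {a : ℝ | Real.exp a ∈ Sset}
      zero_mem' := by
        show Real.exp 0 ∈ Sset
        rw [Real.exp_zero]
        exact ⟨one_pos, 1, one_pos, hone⟩
      add_mem' := by
        rintro a b ⟨ha0, c1, hc1, hP1⟩ ⟨hb0, c2, hc2, hP2⟩
        refine ⟨?_, c1 * c2, mul_pos hc1 hc2, ?_⟩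
        · exact (Real.exp_pos _)
        · show P (Real.exp (a + b)) (c1 * c2)
          rw [Real.exp_add]
          exact hmul _ _ _ _ hb0 hP1 hP2
      neg_mem' := by
        rintro a ⟨ha0, c1, hc1, hP1⟩
        refine ⟨Real.exp_pos _, c1⁻¹, inv_pos.mpr hc1, ?_⟩
        show P (Real.exp (-a)) c1⁻¹
        rw [Real.exp_neg]
        exact hinv _ _ ha0 hc1 hP1 } with hA
  have hAIcc : Set.Icc (Real.log (lam 2)) (Real.log (lam 1)) ⊆ (A : Set ℝ) := by
    rintro a ⟨h1, h2⟩
    show Real.exp a ∈ Sset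
    apply hJS
    apply hIcc
    constructor
    · calc lam 2 = Real.exp (Real.log (lam 2)) :=
            (Real.exp_log (hlampos 2 (by norm_num))).symm
        _ ≤ Real.exp a := Real.exp_le_exp.mpr h1
    · calc Real.exp a ≤ Real.exp (Real.log (lam 1)) := Real.exp_le_exp.mpr h2
        _ = lam 1 := Real.exp_log (hlampos 1 (by norm_num))
  set α := Real.log (lam 2) with hα
  set β := Real.log (lam 1) with hβ
  have hαβ : α < β := Real.log_lt_log (hlampos 2 (by norm_num)) h12
  have hsub : ∀ x : ℝ, 0 ≤ x → x ≤ β - α → x ∈ A := by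
    intro x h1 h2
    have h3 : x + α ∈ A := hAIcc ⟨by linarith, by linarith⟩
    have h4 : α ∈ A := hAIcc ⟨le_refl _, hαβ.le⟩
    have h5 := A.sub_mem h3 h4
    simpa using h5
  have hposA : ∀ x : ℝ, 0 ≤ x → x ∈ A := by
    intro x hx
    obtain ⟨n, hn⟩ := exists_nat_ge (x / (β - α))
    have hε : (0:ℝ) < β - α := by linarith
    have hn1 : x ≤ (n + 1) * (β - α) := by
      have h1 : x / (β - α) ≤ (n : ℝ) + 1 := by
        have : (n:ℝ) ≤ n + 1 := by linarith
        linarith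
      calc x = (x / (β - α)) * (β - α) := by field_simp
        _ ≤ ((n:ℝ) + 1) * (β - α) := mul_le_mul_of_nonneg_right h1 hε.le
    have hn0 : (0:ℝ) < (n : ℝ) + 1 := by positivity
    have hx' : x / ((n:ℝ) + 1) ∈ A := by
      apply hsub
      · positivity
      · rw [div_le_iff₀ hn0]
        calc x ≤ (n + 1) * (β - α) := hn1
          _ = (β - α) * ((n:ℝ) + 1) := by ring
    have hmem := AddSubgroup.nsmul_mem A hx' (n + 1)
    have heq : (n + 1) • (x / ((n:ℝ) + 1)) = x := by
      rw [nsmul_eq_mul]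
      push_cast
      field_simp
    rwa [heq] at hmem
  have hAall : ∀ a : ℝ, a ∈ A := by
    intro a
    rcases le_total 0 a with h | h
    · exact hposA a h
    · have h1 : -a ∈ A := hposA (-a) (by linarith)
      have := A.neg_mem h1
      simpa using this
  have hSall : ∀ l : ℝ, 0 < l → ∃ c, 0 < c ∧ P l c := by
    intro l hl
    have h1 := hAall (Real.log l)
    have h2 : Real.exp (Real.log l) ∈ Sset := h1
    rw [Real.exp_log hl] at h2
    exact h2.2
  -- the limit function
  set c : ℝ → ℝ := fun l => limUnder (nhdsWithin 0 (Set.Ioi 0)) (fun s => ψ (l * s) / ψ s)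
    with hc
  have hcP : ∀ l : ℝ, 0 < l → P l (c l) ∧ 0 < c l := by
    intro l hl
    obtain ⟨c0, hc0, hP0⟩ := hSall l hl
    have heq : c l = c0 := hP0.limUnder_eq
    rw [heq]
    exact ⟨hP0, hc0⟩
  have hcmul : ∀ l1 l2 : ℝ, 0 < l1 → 0 < l2 → c (l1 * l2) = c l1 * c l2 := by
    intro l1 l2 h1 h2
    exact tendsto_nhds_unique (hcP (l1 * l2) (mul_pos h1 h2)).1
      (hmul _ _ _ _ h2 (hcP l1 h1).1 (hcP l2 h2).1)
  have hcmono : ∀ l1 l2 : ℝ, 0 < l1 → l1 ≤ l2 → c l1 ≤ c l2 := by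
    intro l1 l2 h1 h12'
    have h2 : 0 < l2 := lt_of_lt_of_le h1 h12'
    refine le_of_tendsto_of_tendsto (hcP l1 h1).1 (hcP l2 h2).1 ?_
    filter_upwards [self_mem_nhdsWithin] with s hs
    have hs' : (0:ℝ) < s := hs
    have hle : ψ (l1 * s) ≤ ψ (l2 * s) :=
      hψmono (Set.mem_Ioi.mpr (mul_pos h1 hs')) (Set.mem_Ioi.mpr (mul_pos h2 hs'))
        (mul_le_mul_of_nonneg_right h12' hs'.le)
    exact (div_le_div_iff_of_pos_right (hψpos s hs')).mpr hle
  -- additive version and linearity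
  set γ : ℝ → ℝ := fun a => Real.log (c (Real.exp a)) with hγ
  have hγadd : ∀ a b, γ (a + b) = γ a + γ b := by
    intro a b
    show Real.log (c (Real.exp (a + b))) = _
    rw [Real.exp_add, hcmul _ _ (Real.exp_pos a) (Real.exp_pos b),
      Real.log_mul (hcP _ (Real.exp_pos a)).2.ne' (hcP _ (Real.exp_pos b)).2.ne']
  have hγmono : Monotone γ := by
    intro a b hab
    exact Real.log_le_log (hcP _ (Real.exp_pos a)).2
      (hcmono _ _ (Real.exp_pos a) (Real.exp_le_exp.mpr hab))
  set p := γ 1 with hpdef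
  have hγlin : ∀ a, γ a = p * a := stmt19_linear hγadd hγmono
  have hfinal : ∀ l : ℝ, 0 < l → c l = l ^ p := by
    intro l hl
    have h1 : Real.log (c l) = p * Real.log l := by
      have h2 := hγlin (Real.log l)
      rw [hγ] at h2
      simp only [Real.exp_log hl] at h2
      exact h2
    calc c l = Real.exp (Real.log (c l)) := (Real.exp_log (hcP l hl).2).symm
      _ = Real.exp (Real.log l * p) := by rw [h1, mul_comm]
      _ = l ^ p := (Real.rpow_def_of_pos hl p).symm
  have hmain : ∀ l > 0, Tendsto (fun s => ψ (l * s) / ψ s)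
      (nhdsWithin 0 (Set.Ioi 0)) (nhds (l ^ p)) := by
    intro l hl
    have := (hcP l hl).1
    rwa [hfinal l hl] at this
  exact ⟨fun l hl _ => ⟨l ^ p, hmain l hl⟩, p, hmain⟩
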